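/- If μ is an invariant probability measure for the stochastic Lorenz system with β = γ₁ = 0 and ∫|X|²dμ < ∞, then the x-marginal satisfies x = 0 μ-almost surely. Concretely: stationarity together with Itô's formula applied to M(x,y,z) = 2σz − x² yields ∫ x² dμ = 0. -/

import Mathlib

open MeasureTheory

/-- Generator of the stochastic Lorenz system with `β = 0`, `γ₁ = 0`,
acting on functions of `(x,y,z) ∈ ℝ × ℝ × ℝ`:
`L f = σ(y−x)∂ₓf + (x(ρ−z)−y)∂_y f + xy ∂_z f + γ₂∂_y²f + γ₃∂_z²f`. -/
noncomputable def lorenzGenDeg (σ ρ γ2 γ3 : ℝ) (f : ℝ × ℝ × ℝ → ℝ)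
    (p : ℝ × ℝ × ℝ) : ℝ :=
  σ * (p.2.1 - p.1) * deriv (fun t => f (t, p.2.1, p.2.2)) p.1 +
    (p.1 * (ρ - p.2.2) - p.2.1) * deriv (fun t => f (p.1, t, p.2.2)) p.2.1 +
    p.1 * p.2.1 * deriv (fun t => f (p.1, p.2.1, t)) p.2.2 +
    γ2 * deriv (fun t => deriv (fun s => f (p.1, s, p.2.2)) t) p.2.1 +
    γ3 * deriv (fun t => deriv (fun s => f (p.1, p.2.1, s)) t) p.2.2

section ChiLemmas

open Real Filter
open scoped ContDiff

/-- A smooth cutoff: `chi s = 1` for `s ≤ 1`, `chi s = 0` for `s ≥ 4`. -/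
noncomputable def chi : ℝ → ℝ := fun s => Real.smoothTransition ((4 - s) / 3)

lemma chi_contDiff : ContDiff ℝ ∞ chi := by
  have h : ContDiff ℝ ∞ (fun s : ℝ => (4 - s) / 3) :=
    (contDiff_const.sub contDiff_id).div_const 3
  exact Real.smoothTransition.contDiff.comp h

lemma chi_one {s : ℝ} (h : s ≤ 1) : chi s = 1 :=
  Real.smoothTransition.one_of_one_le (by linarith)

lemma chi_zero {s : ℝ} (h : 4 ≤ s) : chi s = 0 :=
  Real.smoothTransition.zero_of_nonpos (by linarith)

lemma chi_nonneg (s : ℝ) : 0 ≤ chi s := Real.smoothTransition.nonneg _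
lemma chi_le_one (s : ℝ) : chi s ≤ 1 := Real.smoothTransition.le_one _

noncomputable def d1 : ℝ → ℝ := deriv chi
noncomputable def d2 : ℝ → ℝ := deriv d1

lemma chi_diff : Differentiable ℝ chi := chi_contDiff.differentiable (by norm_num)
lemma chi_cont : Continuous chi := chi_diff.continuous
lemma d1_contDiff : ContDiff ℝ ∞ d1 := (contDiff_infty_iff_deriv.mp chi_contDiff).2
lemma d1_diff : Differentiable ℝ d1 := d1_contDiff.differentiable (by norm_num)
lemma d1_cont : Continuous d1 := d1_diff.continuous
lemma d2_cont : Continuous d2 := (contDiff_infty_iff_deriv.mp d1_contDiff).2.continuous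

lemma d1_lt_one {s : ℝ} (h : s < 1) : d1 s = 0 := by
  have hev : chi =ᶠ[nhds s] fun _ => 1 := by
    filter_upwards [Iio_mem_nhds h] with t ht using chi_one (le_of_lt ht)
  rw [d1, hev.deriv_eq, deriv_const]

lemma d1_gt_four {s : ℝ} (h : 4 < s) : d1 s = 0 := by
  have hev : chi =ᶠ[nhds s] fun _ => 0 := by
    filter_upwards [Ioi_mem_nhds h] with t ht using chi_zero (le_of_lt ht)
  rw [d1, hev.deriv_eq, deriv_const]

lemma d2_lt_one {s : ℝ} (h : s < 1) : d2 s = 0 := by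
  have hev : d1 =ᶠ[nhds s] fun _ => 0 := by
    filter_upwards [Iio_mem_nhds h] with t ht using d1_lt_one ht
  rw [d2, hev.deriv_eq, deriv_const]

lemma d2_gt_four {s : ℝ} (h : 4 < s) : d2 s = 0 := by
  have hev : d1 =ᶠ[nhds s] fun _ => 0 := by
    filter_upwards [Ioi_mem_nhds h] with t ht using d1_gt_four ht
  rw [d2, hev.deriv_eq, deriv_const]

lemma d1_bound : ∃ K, 0 ≤ K ∧ ∀ s, |d1 s| ≤ K := by
  have hcs : HasCompactSupport d1 := by
    apply HasCompactSupport.intro (isCompact_Icc (a := (0:ℝ)) (b := 5))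
    intro s hs
    simp only [Set.mem_Icc, not_and_or, not_le] at hs
    rcases hs with h | h
    · exact d1_lt_one (by linarith)
    · exact d1_gt_four (by linarith)
  obtain ⟨C, hC⟩ := d1_cont.bounded_above_of_compact_support hcs
  exact ⟨C, (abs_nonneg _).trans (by simpa using hC 0), fun s => by simpa using hC s⟩

lemma d2_bound : ∃ K, 0 ≤ K ∧ ∀ s, |d2 s| ≤ K := by
  have hcs : HasCompactSupport d2 := by
    apply HasCompactSupport.intro (isCompact_Icc (a := (0:ℝ)) (b := 5))
    intro s hs
    simp only [Set.mem_Icc, not_and_or, not_le] at hs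
    rcases hs with h | h
    · exact d2_lt_one (by linarith)
    · exact d2_gt_four (by linarith)
  obtain ⟨C, hC⟩ := d2_cont.bounded_above_of_compact_support hcs
  exact ⟨C, (abs_nonneg _).trans (by simpa using hC 0), fun s => by simpa using hC s⟩

end ChiLemmas

section FcutLemmas

open scoped ContDiff

/-- The truncated Lyapunov function `χ(|p|²/m) · (2σz − x²)`. -/
noncomputable def fcut (σ m : ℝ) (p : ℝ × ℝ × ℝ) : ℝ :=
  chi ((p.1 ^ 2 + p.2.1 ^ 2 + p.2.2 ^ 2) / m) * (2 * σ * p.2.2 - p.1 ^ 2)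

/-- All the error terms in `L fcut`. -/
noncomputable def AA (σ ρ γ2 γ3 m : ℝ) (p : ℝ × ℝ × ℝ) : ℝ :=
  d1 ((p.1 ^ 2 + p.2.1 ^ 2 + p.2.2 ^ 2) / m) * (2 / m) *
      (σ * p.1 * p.2.1 - σ * p.1 ^ 2 + ρ * p.1 * p.2.1 - p.2.1 ^ 2) *
      (2 * σ * p.2.2 - p.1 ^ 2) +
    γ2 * (d2 ((p.1 ^ 2 + p.2.1 ^ 2 + p.2.2 ^ 2) / m) * (2 * p.2.1 / m) ^ 2 *
            (2 * σ * p.2.2 - p.1 ^ 2) +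
          d1 ((p.1 ^ 2 + p.2.1 ^ 2 + p.2.2 ^ 2) / m) * (2 / m) * (2 * σ * p.2.2 - p.1 ^ 2)) +
    γ3 * (d2 ((p.1 ^ 2 + p.2.1 ^ 2 + p.2.2 ^ 2) / m) * (2 * p.2.2 / m) ^ 2 *
            (2 * σ * p.2.2 - p.1 ^ 2) +
          d1 ((p.1 ^ 2 + p.2.1 ^ 2 + p.2.2 ^ 2) / m) * (2 / m) * (2 * σ * p.2.2 - p.1 ^ 2) +
          4 * σ * d1 ((p.1 ^ 2 + p.2.1 ^ 2 + p.2.2 ^ 2) / m) * (2 * p.2.2 / m))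

lemma sliceD {ψ q v : ℝ → ℝ} {t q' v' : ℝ} (hψ : Differentiable ℝ ψ)
    (hv : HasDerivAt v v' t) (hq : HasDerivAt q q' t) :
    HasDerivAt (fun s => ψ (v s) * q s) (deriv ψ (v t) * v' * q t + ψ (v t) * q') t :=
  (((hψ (v t)).hasDerivAt).comp t hv).mul hq

lemma gen_fcut (σ ρ γ2 γ3 m : ℝ) (p : ℝ × ℝ × ℝ) :
    lorenzGenDeg σ ρ γ2 γ3 (fcut σ m) p =
      2 * σ * p.1 ^ 2 * chi ((p.1 ^ 2 + p.2.1 ^ 2 + p.2.2 ^ 2) / m) + AA σ ρ γ2 γ3 m p := by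
  obtain ⟨x, y, z⟩ := p
  simp only [lorenzGenDeg]
  have hsq : ∀ t : ℝ, HasDerivAt (fun s : ℝ => s ^ 2) (2 * t) t := fun t => by
    simpa using hasDerivAt_pow 2 t
  have hvx : HasDerivAt (fun s : ℝ => (s ^ 2 + y ^ 2 + z ^ 2) / m) (2 * x / m) x :=
    (((hsq x).add_const (y ^ 2)).add_const (z ^ 2)).div_const m
  have hvy : HasDerivAt (fun s : ℝ => (x ^ 2 + s ^ 2 + z ^ 2) / m) (2 * y / m) y :=
    ((((hsq y).const_add (x ^ 2))).add_const (z ^ 2)).div_const m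
  have hvy' : ∀ t : ℝ, HasDerivAt (fun s : ℝ => (x ^ 2 + s ^ 2 + z ^ 2) / m) (2 * t / m) t :=
    fun t => ((((hsq t).const_add (x ^ 2))).add_const (z ^ 2)).div_const m
  have hvz' : ∀ t : ℝ, HasDerivAt (fun s : ℝ => (x ^ 2 + y ^ 2 + s ^ 2) / m) (2 * t / m) t :=
    fun t => ((hsq t).const_add (x ^ 2 + y ^ 2)).div_const m
  -- x-derivative
  have e1 : deriv (fun t => fcut σ m (t, y, z)) x =
      d1 ((x ^ 2 + y ^ 2 + z ^ 2) / m) * (2 * x / m) * (2 * σ * z - x ^ 2) +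
        chi ((x ^ 2 + y ^ 2 + z ^ 2) / m) * (-(2 * x)) := by
    have hq : HasDerivAt (fun s : ℝ => 2 * σ * z - s ^ 2) (-(2 * x)) x :=
      (hsq x).const_sub (2 * σ * z)
    exact (sliceD chi_diff hvx hq).deriv
  -- y-derivative (at any point t)
  have e2 : ∀ t : ℝ, deriv (fun s => fcut σ m (x, s, z)) t =
      d1 ((x ^ 2 + t ^ 2 + z ^ 2) / m) * (2 * t / m * (2 * σ * z - x ^ 2)) := by
    intro t
    have hfc : (fun s => fcut σ m (x, s, z)) =
        (fun s => chi ((x ^ 2 + s ^ 2 + z ^ 2) / m) * (2 * σ * z - x ^ 2)) := rfl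
    have h := (sliceD chi_diff (hvy' t) (hasDerivAt_const t (2 * σ * z - x ^ 2))).deriv
    rw [hfc, h]; simp only [d1]; ring
  -- z-derivative (at any point t)
  have e3 : ∀ t : ℝ, deriv (fun s => fcut σ m (x, y, s)) t =
      d1 ((x ^ 2 + y ^ 2 + t ^ 2) / m) * (2 * t / m * (2 * σ * t - x ^ 2)) +
        chi ((x ^ 2 + y ^ 2 + t ^ 2) / m) * (2 * σ) := by
    intro t
    have hq : HasDerivAt (fun s : ℝ => 2 * σ * s - x ^ 2) (2 * σ) t := by
      simpa using ((hasDerivAt_id t).const_mul (2 * σ)).sub_const (x ^ 2)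
    have hfc : (fun s => fcut σ m (x, y, s)) =
        (fun s => chi ((x ^ 2 + y ^ 2 + s ^ 2) / m) * (2 * σ * s - x ^ 2)) := rfl
    have h := (sliceD chi_diff (hvz' t) hq).deriv
    rw [hfc, h]; simp only [d1]; ring
  -- second y-derivative
  have e4 : deriv (fun t => deriv (fun s => fcut σ m (x, s, z)) t) y =
      d2 ((x ^ 2 + y ^ 2 + z ^ 2) / m) * (2 * y / m) * (2 * y / m * (2 * σ * z - x ^ 2)) +
        d1 ((x ^ 2 + y ^ 2 + z ^ 2) / m) * (2 / m * (2 * σ * z - x ^ 2)) := by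
    have hfu : (fun t => deriv (fun s => fcut σ m (x, s, z)) t) =
        fun t => d1 ((x ^ 2 + t ^ 2 + z ^ 2) / m) * (2 * t / m * (2 * σ * z - x ^ 2)) :=
      funext e2
    rw [hfu]
    have hq : HasDerivAt (fun t : ℝ => 2 * t / m * (2 * σ * z - x ^ 2))
        (2 / m * (2 * σ * z - x ^ 2)) y := by
      have h2t : HasDerivAt (fun t : ℝ => 2 * t) 2 y := by
        simpa using (hasDerivAt_id y).const_mul 2
      exact ((h2t.div_const m).mul_const _)
    exact (sliceD d1_diff hvy hq).deriv
  -- second z-derivative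
  have e5 : deriv (fun t => deriv (fun s => fcut σ m (x, y, s)) t) z =
      (d2 ((x ^ 2 + y ^ 2 + z ^ 2) / m) * (2 * z / m) * (2 * z / m * (2 * σ * z - x ^ 2)) +
        d1 ((x ^ 2 + y ^ 2 + z ^ 2) / m) *
          (2 / m * (2 * σ * z - x ^ 2) + 2 * z / m * (2 * σ))) +
      (d1 ((x ^ 2 + y ^ 2 + z ^ 2) / m) * (2 * z / m) * (2 * σ)) := by
    have hfu : (fun t => deriv (fun s => fcut σ m (x, y, s)) t) =
        fun t => d1 ((x ^ 2 + y ^ 2 + t ^ 2) / m) * (2 * t / m * (2 * σ * t - x ^ 2)) +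
          chi ((x ^ 2 + y ^ 2 + t ^ 2) / m) * (2 * σ) :=
      funext e3
    have h2t : HasDerivAt (fun t : ℝ => 2 * t) 2 z := by
      simpa using (hasDerivAt_id z).const_mul 2
    have hlin : HasDerivAt (fun s : ℝ => 2 * σ * s - x ^ 2) (2 * σ) z := by
      simpa using ((hasDerivAt_id z).const_mul (2 * σ)).sub_const (x ^ 2)
    have hq : HasDerivAt (fun t : ℝ => 2 * t / m * (2 * σ * t - x ^ 2))
        (2 / m * (2 * σ * z - x ^ 2) + 2 * z / m * (2 * σ)) z :=
      (h2t.div_const m).mul hlin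
    have hA := sliceD d1_diff (hvz' z) hq
    have hB := sliceD chi_diff (hvz' z) (hasDerivAt_const z (2 * σ))
    have hh := (hA.add hB).deriv
    rw [hfu]; simp only [d1, d2, Pi.add_def] at hh ⊢; rw [hh]; ring
  rw [e1, e2 y, e3 z, e4, e5]
  simp only [AA, d1, d2]
  ring

lemma fcut_contDiff (σ m : ℝ) : ContDiff ℝ 2 (fcut σ m) := by
  have hV : ContDiff ℝ ∞ (fun p : ℝ × ℝ × ℝ => (p.1 ^ 2 + p.2.1 ^ 2 + p.2.2 ^ 2) / m) := by
    have h1 : ContDiff ℝ ∞ (fun p : ℝ × ℝ × ℝ => p.1) := contDiff_fst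
    have h2 : ContDiff ℝ ∞ (fun p : ℝ × ℝ × ℝ => p.2.1) := contDiff_fst.comp contDiff_snd
    have h3 : ContDiff ℝ ∞ (fun p : ℝ × ℝ × ℝ => p.2.2) := contDiff_snd.comp contDiff_snd
    exact (((h1.pow 2).add (h2.pow 2)).add (h3.pow 2)).div_const m
  have h3 : ContDiff ℝ ∞ (fun p : ℝ × ℝ × ℝ => p.2.2) := contDiff_snd.comp contDiff_snd
  have h1 : ContDiff ℝ ∞ (fun p : ℝ × ℝ × ℝ => p.1) := contDiff_fst
  have : ContDiff ℝ ∞ (fcut σ m) :=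
    (chi_contDiff.comp hV).mul ((contDiff_const.mul h3).sub (h1.pow 2))
  exact this.of_le (by decide)

lemma fcut_compactSupport (σ m : ℝ) (hm : 1 ≤ m) : HasCompactSupport (fcut σ m) := by
  apply HasCompactSupport.intro (isCompact_closedBall (0 : ℝ × ℝ × ℝ) (2 * m))
  intro p hp
  have hnorm : 2 * m < ‖p‖ := by
    simp only [Metric.mem_closedBall, dist_zero_right, not_le] at hp
    exact hp
  have hx : |p.1| ≤ ‖p‖ := by simpa [Real.norm_eq_abs] using norm_fst_le p
  have hy : |p.2.1| ≤ ‖p‖ := by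
    simpa [Real.norm_eq_abs] using (norm_fst_le p.2).trans (norm_snd_le p)
  have hz : |p.2.2| ≤ ‖p‖ := by
    simpa [Real.norm_eq_abs] using (norm_snd_le p.2).trans (norm_snd_le p)
  -- ‖p‖² ≤ V p
  have hVn : ‖p‖ ^ 2 ≤ p.1 ^ 2 + p.2.1 ^ 2 + p.2.2 ^ 2 := by
    have hn : ‖p‖ = |p.1| ⊔ (|p.2.1| ⊔ |p.2.2|) := by
      simp [Prod.norm_def, Real.norm_eq_abs]
    rw [hn]
    rcases le_total |p.1| (|p.2.1| ⊔ |p.2.2|) with h | h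
    · rw [sup_eq_right.mpr h]
      rcases le_total |p.2.1| |p.2.2| with h2 | h2
      · rw [sup_eq_right.mpr h2]; nlinarith [sq_abs p.2.2, sq_nonneg p.1, sq_nonneg p.2.1]
      · rw [sup_eq_left.mpr h2]; nlinarith [sq_abs p.2.1, sq_nonneg p.1, sq_nonneg p.2.2]
    · rw [sup_eq_left.mpr h]; nlinarith [sq_abs p.1, sq_nonneg p.2.1, sq_nonneg p.2.2]
  have hm0 : (0:ℝ) < m := by linarith
  have h4 : 4 * m ≤ p.1 ^ 2 + p.2.1 ^ 2 + p.2.2 ^ 2 := by nlinarith [norm_nonneg p]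
  have : chi ((p.1 ^ 2 + p.2.1 ^ 2 + p.2.2 ^ 2) / m) = 0 :=
    chi_zero (by rw [le_div_iff₀ hm0]; linarith)
  simp [fcut, this]

end FcutLemmas


lemma AA_eq_zero_of_lt {σ ρ γ2 γ3 m : ℝ} (hm : 0 < m) (p : ℝ × ℝ × ℝ)
    (h : p.1 ^ 2 + p.2.1 ^ 2 + p.2.2 ^ 2 < m) : AA σ ρ γ2 γ3 m p = 0 := by
  have hw : (p.1 ^ 2 + p.2.1 ^ 2 + p.2.2 ^ 2) / m < 1 := (div_lt_one hm).2 h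
  simp [AA, d1_lt_one hw, d2_lt_one hw]

set_option maxHeartbeats 1000000 in
lemma AA_bound (σ ρ γ2 γ3 : ℝ) (hσ : 0 < σ) (hγ2 : 0 ≤ γ2) (hγ3 : 0 ≤ γ3) :
    ∃ C, 0 ≤ C ∧ ∀ m : ℝ, 1 ≤ m → ∀ p : ℝ × ℝ × ℝ,
      |AA σ ρ γ2 γ3 m p| ≤ C * (1 + ‖p‖ ^ 2) := by
  obtain ⟨K1, hK1n, hK1⟩ := d1_bound
  obtain ⟨K2, hK2n, hK2⟩ := d2_bound
  have hσ' : (0:ℝ) ≤ σ := hσ.le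
  have hq0 : (0:ℝ) ≤ 2 * σ + |ρ| + 1 := by linarith [abs_nonneg ρ]
  have hm0c : (0:ℝ) ≤ 3 * (2 * σ + 1) := by linarith
  have hc1 : (0:ℝ) ≤ K1 * (8 * (2 * σ + |ρ| + 1)) * (3 * (2 * σ + 1)) :=
    mul_nonneg (mul_nonneg hK1n (by linarith)) hm0c
  have hc2 : (0:ℝ) ≤ 16 * K2 * (3 * (2 * σ + 1)) + 2 * K1 * (3 * (2 * σ + 1)) :=
    add_nonneg (mul_nonneg (by linarith) hm0c) (mul_nonneg (by linarith) hm0c)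
  have hc3 : (0:ℝ) ≤ 16 * K2 * (3 * (2 * σ + 1)) + 2 * K1 * (3 * (2 * σ + 1)) + 8 * σ * K1 :=
    add_nonneg hc2 (mul_nonneg (by linarith) hK1n)
  refine ⟨K1 * (8 * (2 * σ + |ρ| + 1)) * (3 * (2 * σ + 1))
      + γ2 * (16 * K2 * (3 * (2 * σ + 1)) + 2 * K1 * (3 * (2 * σ + 1)))
      + γ3 * (16 * K2 * (3 * (2 * σ + 1)) + 2 * K1 * (3 * (2 * σ + 1)) + 8 * σ * K1),
    by nlinarith [mul_nonneg hγ2 hc2, mul_nonneg hγ3 hc3], ?_⟩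
  intro m hm p
  obtain ⟨x, y, z⟩ := p
  have hm0 : (0:ℝ) < m := by linarith
  simp only [AA]
  set r2 : ℝ := ‖((x, y, z) : ℝ × ℝ × ℝ)‖ ^ 2 with hr2
  have hr2n : 0 ≤ r2 := sq_nonneg _
  have hxn : |x| ≤ ‖((x, y, z) : ℝ × ℝ × ℝ)‖ := by
    simpa [Real.norm_eq_abs] using norm_fst_le ((x, y, z) : ℝ × ℝ × ℝ)
  have hyn : |y| ≤ ‖((x, y, z) : ℝ × ℝ × ℝ)‖ := by
    simpa [Real.norm_eq_abs] using
      (norm_fst_le ((y, z) : ℝ × ℝ)).trans (norm_snd_le ((x, y, z) : ℝ × ℝ × ℝ))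
  have hzn : |z| ≤ ‖((x, y, z) : ℝ × ℝ × ℝ)‖ := by
    simpa [Real.norm_eq_abs] using
      (norm_snd_le ((y, z) : ℝ × ℝ)).trans (norm_snd_le ((x, y, z) : ℝ × ℝ × ℝ))
  have hx2 : x ^ 2 ≤ r2 := by nlinarith [abs_nonneg x, sq_abs x]
  have hy2 : y ^ 2 ≤ r2 := by nlinarith [abs_nonneg y, sq_abs y]
  have hz2 : z ^ 2 ≤ r2 := by nlinarith [abs_nonneg z, sq_abs z]
  have hz1 : |z| ≤ 1 + r2 := by
    nlinarith [sq_nonneg (‖((x, y, z) : ℝ × ℝ × ℝ)‖ - 1), norm_nonneg ((x, y, z) : ℝ × ℝ × ℝ)]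
  set s : ℝ := x ^ 2 + y ^ 2 + z ^ 2 with hs
  have hsn : 0 ≤ s := by positivity
  set w : ℝ := s / m with hw
  -- bound on M
  have hMn : |2 * σ * z - x ^ 2| ≤ 3 * (2 * σ + 1) * (1 + r2) := by
    obtain ⟨hzl, hzu⟩ := abs_le.mp hz1
    have h1 : 2 * σ * z ≤ 2 * σ * (1 + r2) :=
      mul_le_mul_of_nonneg_left hzu (by linarith)
    have h2 : 2 * σ * (-(1 + r2)) ≤ 2 * σ * z :=
      mul_le_mul_of_nonneg_left hzl (by linarith)
    have hp1 : (0:ℝ) ≤ (4 * σ + 2) * (1 + r2) := mul_nonneg (by linarith) (by linarith)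
    have hp2 : (0:ℝ) ≤ (4 * σ + 3) * (1 + r2) := mul_nonneg (by linarith) (by linarith)
    rw [abs_le]
    constructor
    · linarith [sq_nonneg x]
    · linarith [sq_nonneg x]
  rcases le_or_gt s (4 * m) with hcase | hcase
  · -- the annulus / inner region: use the uniform derivative bounds
    have hd1 : |d1 w| ≤ K1 := hK1 w
    have hd2 : |d2 w| ≤ K2 := hK2 w
    have h2mn : (0:ℝ) ≤ 2 / m := by positivity
    have h2m : 2 / m ≤ 2 := by
      rw [div_le_iff₀ hm0]; nlinarith
    have hxy : |x * y| ≤ s := by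
      rw [abs_mul]
      nlinarith [sq_nonneg (|x| - |y|), sq_abs x, sq_abs y, sq_nonneg z, abs_nonneg x,
        abs_nonneg y]
    have hQ : |σ * x * y - σ * x ^ 2 + ρ * x * y - y ^ 2| ≤ (2 * σ + |ρ| + 1) * s := by
      obtain ⟨hxyl, hxyu⟩ := abs_le.mp hxy
      have hρ1 : ρ * (x * y) ≤ |ρ| * s := by
        calc ρ * (x * y) ≤ |ρ * (x * y)| := le_abs_self _
          _ = |ρ| * |x * y| := abs_mul _ _
          _ ≤ |ρ| * s := mul_le_mul_of_nonneg_left hxy (abs_nonneg ρ)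
      have hρ2 : -(|ρ| * s) ≤ ρ * (x * y) := by
        have := neg_abs_le (ρ * (x * y))
        have h3 : |ρ * (x * y)| ≤ |ρ| * s := by
          rw [abs_mul]; exact mul_le_mul_of_nonneg_left hxy (abs_nonneg ρ)
        linarith
      have hσxy1 : σ * (x * y) ≤ σ * s := by nlinarith
      have hσxy2 : σ * (-s) ≤ σ * (x * y) := by nlinarith
      have hσx2 : σ * x ^ 2 ≤ σ * s := by nlinarith [sq_nonneg y, sq_nonneg z]
      have hσx2n : 0 ≤ σ * x ^ 2 := by positivity
      have hy2s : y ^ 2 ≤ s := by nlinarith [sq_nonneg x, sq_nonneg z]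
      rw [abs_le]
      constructor <;> nlinarith [sq_nonneg y, abs_nonneg ρ, mul_nonneg (abs_nonneg ρ) hsn]
    -- key smallness facts
    have key1 : 2 / m * ((2 * σ + |ρ| + 1) * s) ≤ 8 * (2 * σ + |ρ| + 1) := by
      rw [div_mul_eq_mul_div, div_le_iff₀ hm0]
      have := mul_le_mul_of_nonneg_left hcase hq0
      linarith
    have hmsq : m ≤ m ^ 2 := le_self_pow₀ (by linarith) (by norm_num)
    have keyy : (2 * y / m) ^ 2 ≤ 16 := by
      rw [div_pow, div_le_iff₀ (by positivity)]
      have h4 : y ^ 2 ≤ 4 * m := by linarith [sq_nonneg x, sq_nonneg z]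
      calc (2 * y) ^ 2 = 4 * y ^ 2 := by ring
        _ ≤ 16 * m := by linarith
        _ ≤ 16 * m ^ 2 := by linarith
    have keyz : (2 * z / m) ^ 2 ≤ 16 := by
      rw [div_pow, div_le_iff₀ (by positivity)]
      have h4 : z ^ 2 ≤ 4 * m := by linarith [sq_nonneg x, sq_nonneg y]
      calc (2 * z) ^ 2 = 4 * z ^ 2 := by ring
        _ ≤ 16 * m := by linarith
        _ ≤ 16 * m ^ 2 := by linarith
    have keyz1 : |2 * z / m| ≤ 2 * (1 + r2) := by
      rw [abs_div, abs_of_pos hm0, div_le_iff₀ hm0, abs_mul]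
      have h2 : |(2:ℝ)| = 2 := by norm_num
      rw [h2]
      have := mul_le_mul hz1 hm zero_le_one (by linarith : (0:ℝ) ≤ 1 + r2)
      linarith [abs_nonneg z]
    -- term bounds
    have hT1 : |d1 w * (2 / m) * (σ * x * y - σ * x ^ 2 + ρ * x * y - y ^ 2) *
        (2 * σ * z - x ^ 2)| ≤
        K1 * (8 * (2 * σ + |ρ| + 1)) * (3 * (2 * σ + 1) * (1 + r2)) := by
      have e : |d1 w * (2 / m) * (σ * x * y - σ * x ^ 2 + ρ * x * y - y ^ 2) *
          (2 * σ * z - x ^ 2)| =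
          |d1 w| * (2 / m * |σ * x * y - σ * x ^ 2 + ρ * x * y - y ^ 2|) *
            |2 * σ * z - x ^ 2| := by
        rw [abs_mul, abs_mul, abs_mul, abs_of_nonneg h2mn]; ring
      rw [e]
      have hQm : 2 / m * |σ * x * y - σ * x ^ 2 + ρ * x * y - y ^ 2| ≤
          8 * (2 * σ + |ρ| + 1) :=
        le_trans (mul_le_mul_of_nonneg_left hQ h2mn) key1
      exact mul_le_mul (mul_le_mul hd1 hQm (by positivity) hK1n) hMn (abs_nonneg _)
        (mul_nonneg hK1n (by linarith))
    have hT2 : |d2 w * (2 * y / m) ^ 2 * (2 * σ * z - x ^ 2)| ≤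
        16 * K2 * (3 * (2 * σ + 1) * (1 + r2)) := by
      have e : |d2 w * (2 * y / m) ^ 2 * (2 * σ * z - x ^ 2)| =
          |d2 w| * (2 * y / m) ^ 2 * |2 * σ * z - x ^ 2| := by
        rw [abs_mul, abs_mul, abs_of_nonneg (sq_nonneg (2 * y / m))]
      rw [e]
      have h1 : |d2 w| * (2 * y / m) ^ 2 ≤ K2 * 16 :=
        mul_le_mul hd2 keyy (sq_nonneg _) hK2n
      calc |d2 w| * (2 * y / m) ^ 2 * |2 * σ * z - x ^ 2|
          ≤ K2 * 16 * (3 * (2 * σ + 1) * (1 + r2)) :=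
            mul_le_mul h1 hMn (abs_nonneg _) (by positivity)
        _ = 16 * K2 * (3 * (2 * σ + 1) * (1 + r2)) := by ring
    have hT4 : |d2 w * (2 * z / m) ^ 2 * (2 * σ * z - x ^ 2)| ≤
        16 * K2 * (3 * (2 * σ + 1) * (1 + r2)) := by
      have e : |d2 w * (2 * z / m) ^ 2 * (2 * σ * z - x ^ 2)| =
          |d2 w| * (2 * z / m) ^ 2 * |2 * σ * z - x ^ 2| := by
        rw [abs_mul, abs_mul, abs_of_nonneg (sq_nonneg (2 * z / m))]
      rw [e]
      have h1 : |d2 w| * (2 * z / m) ^ 2 ≤ K2 * 16 :=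
        mul_le_mul hd2 keyz (sq_nonneg _) hK2n
      calc |d2 w| * (2 * z / m) ^ 2 * |2 * σ * z - x ^ 2|
          ≤ K2 * 16 * (3 * (2 * σ + 1) * (1 + r2)) :=
            mul_le_mul h1 hMn (abs_nonneg _) (by positivity)
        _ = 16 * K2 * (3 * (2 * σ + 1) * (1 + r2)) := by ring
    have hT3 : |d1 w * (2 / m) * (2 * σ * z - x ^ 2)| ≤
        2 * K1 * (3 * (2 * σ + 1) * (1 + r2)) := by
      have e : |d1 w * (2 / m) * (2 * σ * z - x ^ 2)| =
          |d1 w| * (2 / m) * |2 * σ * z - x ^ 2| := by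
        rw [abs_mul, abs_mul, abs_of_nonneg h2mn]
      rw [e]
      calc |d1 w| * (2 / m) * |2 * σ * z - x ^ 2|
          ≤ K1 * 2 * (3 * (2 * σ + 1) * (1 + r2)) :=
            mul_le_mul (mul_le_mul hd1 h2m h2mn hK1n) hMn (abs_nonneg _)
              (mul_nonneg hK1n (by norm_num))
        _ = 2 * K1 * (3 * (2 * σ + 1) * (1 + r2)) := by ring
    have hT6 : |4 * σ * d1 w * (2 * z / m)| ≤ 8 * σ * K1 * (1 + r2) := by
      have e : |4 * σ * d1 w * (2 * z / m)| = 4 * σ * |d1 w| * |2 * z / m| := by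
        rw [abs_mul, abs_mul, abs_of_nonneg (by positivity : (0:ℝ) ≤ 4 * σ)]
      rw [e]
      calc 4 * σ * |d1 w| * |2 * z / m|
          ≤ 4 * σ * K1 * (2 * (1 + r2)) :=
            mul_le_mul (mul_le_mul_of_nonneg_left hd1 (by positivity)) keyz1 (abs_nonneg _)
              (by positivity)
        _ = 8 * σ * K1 * (1 + r2) := by ring
    -- assemble
    have habs : ∀ a b c : ℝ, |a + b + c| ≤ |a| + |b| + |c| := fun a b c =>
      (abs_add_le _ _).trans (add_le_add_left (abs_add_le a b) _)
    calc |d1 w * (2 / m) * (σ * x * y - σ * x ^ 2 + ρ * x * y - y ^ 2) *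
            (2 * σ * z - x ^ 2) +
          γ2 * (d2 w * (2 * y / m) ^ 2 * (2 * σ * z - x ^ 2) +
            d1 w * (2 / m) * (2 * σ * z - x ^ 2)) +
          γ3 * (d2 w * (2 * z / m) ^ 2 * (2 * σ * z - x ^ 2) +
            d1 w * (2 / m) * (2 * σ * z - x ^ 2) + 4 * σ * d1 w * (2 * z / m))|
        ≤ |d1 w * (2 / m) * (σ * x * y - σ * x ^ 2 + ρ * x * y - y ^ 2) *
            (2 * σ * z - x ^ 2)| +
          |γ2 * (d2 w * (2 * y / m) ^ 2 * (2 * σ * z - x ^ 2) +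
            d1 w * (2 / m) * (2 * σ * z - x ^ 2))| +
          |γ3 * (d2 w * (2 * z / m) ^ 2 * (2 * σ * z - x ^ 2) +
            d1 w * (2 / m) * (2 * σ * z - x ^ 2) + 4 * σ * d1 w * (2 * z / m))| :=
          habs _ _ _
      _ ≤ K1 * (8 * (2 * σ + |ρ| + 1)) * (3 * (2 * σ + 1) * (1 + r2)) +
          γ2 * (16 * K2 * (3 * (2 * σ + 1) * (1 + r2)) +
            2 * K1 * (3 * (2 * σ + 1) * (1 + r2))) +
          γ3 * (16 * K2 * (3 * (2 * σ + 1) * (1 + r2)) +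
            2 * K1 * (3 * (2 * σ + 1) * (1 + r2)) + 8 * σ * K1 * (1 + r2)) := by
          have h23 : |γ2 * (d2 w * (2 * y / m) ^ 2 * (2 * σ * z - x ^ 2) +
              d1 w * (2 / m) * (2 * σ * z - x ^ 2))| ≤
              γ2 * (16 * K2 * (3 * (2 * σ + 1) * (1 + r2)) +
                2 * K1 * (3 * (2 * σ + 1) * (1 + r2))) := by
            rw [abs_mul, abs_of_nonneg hγ2]
            exact mul_le_mul_of_nonneg_left ((abs_add_le _ _).trans (add_le_add hT2 hT3)) hγ2
          have h456 : |γ3 * (d2 w * (2 * z / m) ^ 2 * (2 * σ * z - x ^ 2) +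
              d1 w * (2 / m) * (2 * σ * z - x ^ 2) + 4 * σ * d1 w * (2 * z / m))| ≤
              γ3 * (16 * K2 * (3 * (2 * σ + 1) * (1 + r2)) +
                2 * K1 * (3 * (2 * σ + 1) * (1 + r2)) + 8 * σ * K1 * (1 + r2)) := by
            rw [abs_mul, abs_of_nonneg hγ3]
            refine mul_le_mul_of_nonneg_left ?_ hγ3
            exact (habs _ _ _).trans (add_le_add (add_le_add hT4 hT3) hT6)
          linarith
      _ = (K1 * (8 * (2 * σ + |ρ| + 1)) * (3 * (2 * σ + 1))
          + γ2 * (16 * K2 * (3 * (2 * σ + 1)) + 2 * K1 * (3 * (2 * σ + 1)))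
          + γ3 * (16 * K2 * (3 * (2 * σ + 1)) + 2 * K1 * (3 * (2 * σ + 1)) + 8 * σ * K1)) *
          (1 + r2) := by ring
  · -- the outer region: all derivative factors vanish
    have hw4 : 4 < w := by
      rw [hw, lt_div_iff₀ hm0]; linarith
    rw [d1_gt_four hw4, d2_gt_four hw4]
    simp only [zero_mul, mul_zero, add_zero, zero_add, abs_zero]
    exact mul_nonneg (by nlinarith [mul_nonneg hγ2 hc2, mul_nonneg hγ3 hc3]) (by linarith)

theorem no_invariant_measure_degenerate_noise
    (σ ρ γ2 γ3 : ℝ) (hσ : 0 < σ) (hγ2 : 0 ≤ γ2) (hγ3 : 0 ≤ γ3)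
    (μ : Measure (ℝ × ℝ × ℝ)) (hμ : IsProbabilityMeasure μ)
    (hmom : Integrable (fun p : ℝ × ℝ × ℝ => ‖p‖ ^ 2) μ)
    (hinv : ∀ f : ℝ × ℝ × ℝ → ℝ, ContDiff ℝ 2 f → HasCompactSupport f →
      ∫ p, lorenzGenDeg σ ρ γ2 γ3 f p ∂μ = 0) :
    (∫ p : ℝ × ℝ × ℝ, p.1 ^ 2 ∂μ) = 0 ∧ ∀ᵐ p : ℝ × ℝ × ℝ ∂μ, p.1 = 0 := by
  obtain ⟨C, hC, hbd⟩ := AA_bound σ ρ γ2 γ3 hσ hγ2 hγ3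
  have hm1 : ∀ n : ℕ, (1:ℝ) ≤ ((n:ℝ) + 1) ^ 2 := fun n => by
    nlinarith [Nat.cast_nonneg (α := ℝ) n]
  have hm0 : ∀ n : ℕ, (0:ℝ) < ((n:ℝ) + 1) ^ 2 := fun n => by positivity
  have hVc : Continuous (fun p : ℝ × ℝ × ℝ => p.1 ^ 2 + p.2.1 ^ 2 + p.2.2 ^ 2) := by fun_prop
  have hwc : ∀ n : ℕ,
      Continuous (fun p : ℝ × ℝ × ℝ =>
        (p.1 ^ 2 + p.2.1 ^ 2 + p.2.2 ^ 2) / (((n:ℝ) + 1) ^ 2)) :=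
    fun n => hVc.div_const _
  have hAAc : ∀ n : ℕ, Continuous (AA σ ρ γ2 γ3 (((n:ℝ) + 1) ^ 2)) := by
    intro n
    have hd1c := d1_cont.comp (hwc n)
    have hd2c := d2_cont.comp (hwc n)
    unfold AA
    fun_prop
  have hFc : ∀ n : ℕ, Continuous (fun p : ℝ × ℝ × ℝ =>
      2 * σ * p.1 ^ 2 * chi ((p.1 ^ 2 + p.2.1 ^ 2 + p.2.2 ^ 2) / (((n:ℝ) + 1) ^ 2))) := by
    intro n
    have hcc := chi_cont.comp (hwc n)
    fun_prop
  have hgi : Integrable (fun p : ℝ × ℝ × ℝ => C * (1 + ‖p‖ ^ 2)) μ :=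
    ((integrable_const (1:ℝ)).add hmom).const_mul C
  have hAAi : ∀ n : ℕ, Integrable (AA σ ρ γ2 γ3 (((n:ℝ) + 1) ^ 2)) μ := fun n =>
    hgi.mono' (hAAc n).aestronglyMeasurable
      (Filter.Eventually.of_forall fun p => by
        simpa [Real.norm_eq_abs] using hbd _ (hm1 n) p)
  have hx2le : ∀ p : ℝ × ℝ × ℝ, p.1 ^ 2 ≤ ‖p‖ ^ 2 := fun p => by
    have h : |p.1| ≤ ‖p‖ := by simpa [Real.norm_eq_abs] using norm_fst_le p
    nlinarith [abs_nonneg p.1, sq_abs p.1]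
  have hFbd : ∀ n : ℕ, ∀ p : ℝ × ℝ × ℝ,
      ‖2 * σ * p.1 ^ 2 * chi ((p.1 ^ 2 + p.2.1 ^ 2 + p.2.2 ^ 2) / (((n:ℝ) + 1) ^ 2))‖ ≤
        2 * σ * ‖p‖ ^ 2 := by
    intro n p
    rw [Real.norm_eq_abs, abs_mul]
    have h1 : |2 * σ * p.1 ^ 2| = 2 * σ * p.1 ^ 2 := abs_of_nonneg (by positivity)
    have h2 : |chi ((p.1 ^ 2 + p.2.1 ^ 2 + p.2.2 ^ 2) / (((n:ℝ) + 1) ^ 2))| ≤ 1 := by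
      rw [abs_of_nonneg (chi_nonneg _)]; exact chi_le_one _
    rw [h1]
    calc 2 * σ * p.1 ^ 2 * |chi ((p.1 ^ 2 + p.2.1 ^ 2 + p.2.2 ^ 2) / (((n:ℝ) + 1) ^ 2))|
        ≤ 2 * σ * p.1 ^ 2 * 1 := mul_le_mul_of_nonneg_left h2 (by positivity)
      _ = 2 * σ * p.1 ^ 2 := by ring
      _ ≤ 2 * σ * ‖p‖ ^ 2 := by nlinarith [hx2le p]
  have hFi : ∀ n : ℕ, Integrable (fun p : ℝ × ℝ × ℝ =>
      2 * σ * p.1 ^ 2 * chi ((p.1 ^ 2 + p.2.1 ^ 2 + p.2.2 ^ 2) / (((n:ℝ) + 1) ^ 2))) μ :=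
    fun n => (hmom.const_mul (2 * σ)).mono' (hFc n).aestronglyMeasurable
      (Filter.Eventually.of_forall fun p => hFbd n p)
  have hzero : ∀ n : ℕ,
      (∫ p : ℝ × ℝ × ℝ,
        2 * σ * p.1 ^ 2 * chi ((p.1 ^ 2 + p.2.1 ^ 2 + p.2.2 ^ 2) / (((n:ℝ) + 1) ^ 2)) ∂μ) =
      - ∫ p, AA σ ρ γ2 γ3 (((n:ℝ) + 1) ^ 2) p ∂μ := by
    intro n
    have h0 := hinv (fcut σ (((n:ℝ) + 1) ^ 2)) (fcut_contDiff _ _)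
      (fcut_compactSupport _ _ (hm1 n))
    have he : (fun p => lorenzGenDeg σ ρ γ2 γ3 (fcut σ (((n:ℝ) + 1) ^ 2)) p) =
        fun p => 2 * σ * p.1 ^ 2 * chi ((p.1 ^ 2 + p.2.1 ^ 2 + p.2.2 ^ 2) / (((n:ℝ) + 1) ^ 2))
          + AA σ ρ γ2 γ3 (((n:ℝ) + 1) ^ 2) p :=
      funext (gen_fcut σ ρ γ2 γ3 (((n:ℝ) + 1) ^ 2))
    rw [he, integral_add (hFi n) (hAAi n)] at h0
    linarith
  have hlim2 : Filter.Tendsto (fun n : ℕ => ∫ p, AA σ ρ γ2 γ3 (((n:ℝ) + 1) ^ 2) p ∂μ)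
      Filter.atTop (nhds 0) := by
    have h := tendsto_integral_of_dominated_convergence
      (F := fun (n : ℕ) (p : ℝ × ℝ × ℝ) => AA σ ρ γ2 γ3 (((n:ℝ) + 1) ^ 2) p)
      (f := fun _ => (0:ℝ)) (fun p => C * (1 + ‖p‖ ^ 2))
      (fun n => (hAAc n).aestronglyMeasurable) hgi
      (fun n => Filter.Eventually.of_forall fun p => by
        simpa [Real.norm_eq_abs] using hbd _ (hm1 n) p)
      (Filter.Eventually.of_forall fun p => by
        apply Filter.Tendsto.congr' _ tendsto_const_nhds
        filter_upwards [Filter.eventually_ge_atTop ⌈p.1 ^ 2 + p.2.1 ^ 2 + p.2.2 ^ 2⌉₊]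
          with n hn
        have hcast : ((⌈p.1 ^ 2 + p.2.1 ^ 2 + p.2.2 ^ 2⌉₊ : ℕ) : ℝ) ≤ (n : ℝ) :=
          Nat.cast_le.mpr hn
        have hlt : p.1 ^ 2 + p.2.1 ^ 2 + p.2.2 ^ 2 < ((n:ℝ) + 1) ^ 2 := by
          nlinarith [Nat.le_ceil (p.1 ^ 2 + p.2.1 ^ 2 + p.2.2 ^ 2),
            Nat.cast_nonneg (α := ℝ) n]
        exact (AA_eq_zero_of_lt (hm0 n) p hlt).symm)
    simpa using h
  have hlim1 : Filter.Tendsto (fun n : ℕ => ∫ p : ℝ × ℝ × ℝ,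
      2 * σ * p.1 ^ 2 * chi ((p.1 ^ 2 + p.2.1 ^ 2 + p.2.2 ^ 2) / (((n:ℝ) + 1) ^ 2)) ∂μ)
      Filter.atTop (nhds (∫ p : ℝ × ℝ × ℝ, 2 * σ * p.1 ^ 2 ∂μ)) := by
    apply tendsto_integral_of_dominated_convergence (fun p => 2 * σ * ‖p‖ ^ 2)
      (fun n => (hFc n).aestronglyMeasurable) (hmom.const_mul (2 * σ))
      (fun n => Filter.Eventually.of_forall fun p => hFbd n p)
    apply Filter.Eventually.of_forall
    intro p
    apply Filter.Tendsto.congr' _ tendsto_const_nhds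
    filter_upwards [Filter.eventually_ge_atTop ⌈p.1 ^ 2 + p.2.1 ^ 2 + p.2.2 ^ 2⌉₊]
      with n hn
    have hcast : ((⌈p.1 ^ 2 + p.2.1 ^ 2 + p.2.2 ^ 2⌉₊ : ℕ) : ℝ) ≤ (n : ℝ) :=
      Nat.cast_le.mpr hn
    have hle : (p.1 ^ 2 + p.2.1 ^ 2 + p.2.2 ^ 2) / (((n:ℝ) + 1) ^ 2) ≤ 1 := by
      rw [div_le_one (hm0 n)]
      nlinarith [Nat.le_ceil (p.1 ^ 2 + p.2.1 ^ 2 + p.2.2 ^ 2),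
        Nat.cast_nonneg (α := ℝ) n]
    rw [chi_one hle, mul_one]
  have hFtend : Filter.Tendsto (fun n : ℕ => ∫ p : ℝ × ℝ × ℝ,
      2 * σ * p.1 ^ 2 * chi ((p.1 ^ 2 + p.2.1 ^ 2 + p.2.2 ^ 2) / (((n:ℝ) + 1) ^ 2)) ∂μ)
      Filter.atTop (nhds 0) := by
    have h := hlim2.neg
    rw [neg_zero] at h
    exact h.congr fun n => (hzero n).symm
  have hIeq : (∫ p : ℝ × ℝ × ℝ, 2 * σ * p.1 ^ 2 ∂μ) = 0 :=
    tendsto_nhds_unique hlim1 hFtend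
  rw [integral_const_mul] at hIeq
  have hx2eq : (∫ p : ℝ × ℝ × ℝ, p.1 ^ 2 ∂μ) = 0 := by
    rcases mul_eq_zero.mp hIeq with h | h
    · linarith
    · exact h
  refine ⟨hx2eq, ?_⟩
  have hx2i : Integrable (fun p : ℝ × ℝ × ℝ => p.1 ^ 2) μ :=
    hmom.mono' ((continuous_fst.pow 2).aestronglyMeasurable)
      (Filter.Eventually.of_forall fun p => by
        rw [Real.norm_eq_abs, abs_of_nonneg (sq_nonneg p.1)]
        exact hx2le p)
  have h0 := (integral_eq_zero_iff_of_nonneg (f := fun p : ℝ × ℝ × ℝ => p.1 ^ 2)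
    (fun p => sq_nonneg p.1) hx2i).mp hx2eq
  filter_upwards [h0] with p hp
  exact (pow_eq_zero_iff two_ne_zero).mp hp
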